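/- Let 1 ≤ k < l ≤ n with l − k + 1 ≥ m, and let f_1 > f_2 > ⋯ > f_r be all diagonal monomials of Y_{kl}, ordered decreasingly by τ. Fix 1 ≤ u ≤ r−1, write f_{u+1} = X_{1c_1}X_{2c_2}⋯X_{mc_m} (so k ≤ c_1 < ⋯ < c_m ≤ l) and set c_0 = k−1. Then the colon ideal (⟨f_1,…,f_u⟩ : f_{u+1}) in K[X] equals the ideal generated by the variables X_{ib} with 1 ≤ i ≤ m and c_{i−1} < b < c_i. In particular, every such colon ideal is generated by variables, so the ideal J_{kl} has linear quotients with respect to this ordering of its generators. -/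

import Mathlib

open MvPolynomial

/-- The exponent vector of the diagonal monomial with column sequence `c`
(rows `1,…,m`, row `i` contributing the variable `X (i, c i)`). -/
noncomputable def expVec (m : ℕ) (c : ℕ → ℕ) : (ℕ × ℕ) →₀ ℕ :=
  ∑ i ∈ Finset.Icc 1 m, Finsupp.single (i, c i) 1

/-- The diagonal monomial `X_{1 c₁} X_{2 c₂} ⋯ X_{m c_m}`. -/
noncomputable def diagMon (K : Type*) [Field K] (m : ℕ) (c : ℕ → ℕ) :
    MvPolynomial (ℕ × ℕ) K :=
  ∏ i ∈ Finset.Icc 1 m, MvPolynomial.X (i, c i)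

/-- `tauGt a b` : the monomial with exponent vector `a` is strictly larger than the one
with exponent vector `b` in the lexicographic monomial order τ induced by
`X 11 > X 12 > ⋯ > X 1n > X 21 > ⋯ > X mn` : at the most significant variable where
they differ (i.e. the lexicographically smallest index pair), `a` has the bigger exponent. -/
def tauGt (a b : (ℕ × ℕ) →₀ ℕ) : Prop :=
  ∃ p : ℕ × ℕ, b p < a p ∧
    ∀ q : ℕ × ℕ, (q.1 < p.1 ∨ (q.1 = p.1 ∧ q.2 < p.2)) → a q = b q

/-- `c` is the column sequence of a diagonal monomial of the submatrix `Y_{kl}`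
(columns `k` through `l`): strictly increasing on `1,…,m` with values in `[k,l]`. -/
def IsDiagSeq (m k l : ℕ) (c : ℕ → ℕ) : Prop :=
  (∀ i, 1 ≤ i → i < m → c i < c (i + 1)) ∧ k ≤ c 1 ∧ c m ≤ l

/-- The ideal `J_{kl}` of `K[X]` generated by all diagonal monomials of `Y_{kl}`. -/
noncomputable def Jkl (K : Type*) [Field K] (m k l : ℕ) : Ideal (MvPolynomial (ℕ × ℕ) K) :=
  Ideal.span {g | ∃ c, IsDiagSeq m k l c ∧ g = diagMon K m c}

lemma expVec_apply (m : ℕ) (c : ℕ → ℕ) (i b : ℕ) :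
    expVec m c (i, b) = if 1 ≤ i ∧ i ≤ m ∧ c i = b then 1 else 0 := by
  classical
  rw [expVec, Finsupp.finset_sum_apply]
  have h : ∀ j ∈ Finset.Icc 1 m, (Finsupp.single ((j : ℕ), c j) (1 : ℕ)) (i, b)
      = if j = i then (if c i = b then 1 else 0) else 0 := by
    intro j _
    rcases eq_or_ne j i with h | h
    · subst h; simp [Finsupp.single_apply, Prod.ext_iff]
    · simp [Finsupp.single_apply, Prod.ext_iff, h]
  rw [Finset.sum_congr rfl h, Finset.sum_ite_eq' (Finset.Icc 1 m) i]
  simp only [Finset.mem_Icc]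
  split_ifs with h1 h2 h3 h3 <;> omega

lemma diagMon_eq (K : Type*) [Field K] (m : ℕ) (c : ℕ → ℕ) :
    diagMon K m c = monomial (expVec m c) (1 : K) := by
  classical
  rw [diagMon, expVec]
  induction (Finset.Icc 1 m) using Finset.induction with
  | empty => simp
  | insert _ _ h ih =>
    rw [Finset.prod_insert h, Finset.sum_insert h, ih]
    rw [show (X ((_ : ℕ), c _) : MvPolynomial (ℕ × ℕ) K)
        = monomial (Finsupp.single (_, c _) 1) (1 : K) from rfl, monomial_mul, one_mul]

lemma tauGt_extract {m : ℕ} {a c : ℕ → ℕ}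
    (h : tauGt (expVec m a) (expVec m c)) :
    ∃ i, 1 ≤ i ∧ i ≤ m ∧ a i < c i ∧ ∀ j, 1 ≤ j → j < i → a j = c j := by
  obtain ⟨⟨i, s⟩, hlt, hag⟩ := h
  rw [expVec_apply, expVec_apply] at hlt
  split_ifs at hlt with hC hA hA
  · exact absurd hlt (by omega)
  · exact absurd hlt (by omega)
  · obtain ⟨hi1, him, has⟩ := hA
    subst has
    have hcn : c i ≠ a i := fun hh => hC ⟨hi1, him, hh⟩
    refine ⟨i, hi1, him, ?_, ?_⟩
    · by_contra hle
      have hci : c i < a i := by omega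
      have hq := hag (i, c i) (Or.inr ⟨rfl, hci⟩)
      rw [expVec_apply, expVec_apply,
        if_neg (fun hh : 1 ≤ i ∧ i ≤ m ∧ a i = c i => hcn hh.2.2.symm),
        if_pos ⟨hi1, him, rfl⟩] at hq
      exact one_ne_zero hq.symm
    · intro j hj1 hji
      have hq := hag (j, a j) (Or.inl hji)
      rw [expVec_apply, expVec_apply, if_pos ⟨hj1, by omega, rfl⟩] at hq
      by_contra hne
      rw [if_neg (fun hh : 1 ≤ j ∧ j ≤ m ∧ c j = a j => hne hh.2.2.symm)] at hq
      exact one_ne_zero hq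
  · exact absurd hlt (by omega)

/-- For `1 ≤ k < l ≤ n` with `l - k + 1 ≥ m`, let `f₁ > ⋯ > f_r` be all
diagonal monomials of `Y_{kl}` ordered decreasingly by τ; fix `1 ≤ u ≤ r - 1`, write
`f_{u+1} = X_{1c₁}⋯X_{mc_m}` (so `k ≤ c₁ < ⋯ < c_m ≤ l`) and set `c₀ = k - 1`.  Then
`(⟨f₁,…,f_u⟩ : f_{u+1})` equals the ideal generated by the variables `X_{ib}` with
`1 ≤ i ≤ m`, `c_{i-1} < b < c_i`; in particular it is generated by variables, so
`J_{kl}` has linear quotients with respect to this ordering. -/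
theorem stmt_1 (K : Type*) [Field K] (m n k l : ℕ) (hm : 1 ≤ m) (hmn : m ≤ n)
    (hk : 1 ≤ k) (hkl : k < l) (hln : l ≤ n) (hlen : m ≤ l - k + 1)
    (c : ℕ → ℕ) (hc0 : c 0 = k - 1) (hc : IsDiagSeq m k l c)
    (hu : ∃ a, IsDiagSeq m k l a ∧ tauGt (expVec m a) (expVec m c)) :
    Submodule.colon
      (Ideal.span {g : MvPolynomial (ℕ × ℕ) K |
        ∃ a, IsDiagSeq m k l a ∧ tauGt (expVec m a) (expVec m c) ∧ g = diagMon K m a})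
      (Ideal.span {diagMon K m c}) =
    Ideal.span {P : MvPolynomial (ℕ × ℕ) K |
        ∃ i b : ℕ, 1 ≤ i ∧ i ≤ m ∧ c (i - 1) < b ∧ b < c i ∧ P = MvPolynomial.X (i, b)} ∧
    ∃ V : Set (ℕ × ℕ),
      Submodule.colon
        (Ideal.span {g : MvPolynomial (ℕ × ℕ) K |
          ∃ a, IsDiagSeq m k l a ∧ tauGt (expVec m a) (expVec m c) ∧ g = diagMon K m a})
        (Ideal.span {diagMon K m c}) =
      Ideal.span (MvPolynomial.X '' V) := by
  classical
  have hmono := hc.1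
  set S : Set ((ℕ × ℕ) →₀ ℕ) :=
    {e | ∃ a, IsDiagSeq m k l a ∧ tauGt (expVec m a) (expVec m c) ∧ e = expVec m a} with hS
  set V : Set (ℕ × ℕ) :=
    {q | 1 ≤ q.1 ∧ q.1 ≤ m ∧ c (q.1 - 1) < q.2 ∧ q.2 < c q.1} with hV
  have hgen : {g : MvPolynomial (ℕ × ℕ) K |
      ∃ a, IsDiagSeq m k l a ∧ tauGt (expVec m a) (expVec m c) ∧ g = diagMon K m a}
      = (fun e => monomial e (1 : K)) '' S := by
    ext g
    constructor
    · rintro ⟨a, ha, hgt, rfl⟩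
      exact ⟨expVec m a, ⟨a, ha, hgt, rfl⟩, (diagMon_eq K m a).symm⟩
    · rintro ⟨e, ⟨a, ha, hgt, rfl⟩, rfl⟩
      exact ⟨a, ha, hgt, (diagMon_eq K m a).symm⟩
  have hXV : {P : MvPolynomial (ℕ × ℕ) K |
      ∃ i b : ℕ, 1 ≤ i ∧ i ≤ m ∧ c (i - 1) < b ∧ b < c i ∧ P = MvPolynomial.X (i, b)}
      = MvPolynomial.X '' V := by
    ext P
    constructor
    · rintro ⟨i, b, h1, h2, h3, h4, rfl⟩
      exact ⟨(i, b), ⟨h1, h2, h3, h4⟩, rfl⟩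
    · rintro ⟨⟨i, b⟩, ⟨h1, h2, h3, h4⟩, rfl⟩
      exact ⟨i, b, h1, h2, h3, h4, rfl⟩
  have main : Submodule.colon
      (Ideal.span {g : MvPolynomial (ℕ × ℕ) K |
        ∃ a, IsDiagSeq m k l a ∧ tauGt (expVec m a) (expVec m c) ∧ g = diagMon K m a})
      (Ideal.span {diagMon K m c})
      = Ideal.span (MvPolynomial.X '' V) := by
    rw [hgen, diagMon_eq K m c]
    ext f
    rw [Ideal.mem_colon_span_singleton, mem_ideal_span_monomial_image, mem_ideal_span_X_image]
    constructor
    · intro H e he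
      have hmem : e + expVec m c ∈ (f * monomial (expVec m c) (1 : K)).support := by
        rw [mem_support_iff, coeff_mul_monomial, mul_one]
        exact mem_support_iff.mp he
      obtain ⟨s, ⟨a, ha, hgt, rfl⟩, hle⟩ := H _ hmem
      obtain ⟨i, hi1, him, hlt, hagree⟩ := tauGt_extract hgt
      refine ⟨(i, a i), ⟨hi1, him, ?_, hlt⟩, ?_⟩
      · show c (i - 1) < a i
        rcases eq_or_lt_of_le hi1 with h1 | h1
        · subst h1
          have hk1 := ha.2.1
          rw [show (1 : ℕ) - 1 = 0 from rfl, hc0]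
          omega
        · have he2 : a (i - 1) = c (i - 1) := hagree (i - 1) (by omega) (by omega)
          have he3 : a (i - 1) < a i := by
            have := ha.1 (i - 1) (by omega) (by omega)
            rwa [Nat.sub_add_cancel (by omega : 1 ≤ i)] at this
          omega
      · show e (i, a i) ≠ 0
        have h1 := Finsupp.le_def.mp hle (i, a i)
        rw [expVec_apply, if_pos ⟨hi1, him, rfl⟩, Finsupp.add_apply, expVec_apply,
          if_neg (fun hh : 1 ≤ i ∧ i ≤ m ∧ c i = a i => by omega)] at h1
        omega
    · intro H e' he'
      rw [mem_support_iff, coeff_mul_monomial'] at he'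
      by_cases hde : expVec m c ≤ e'
      swap
      · rw [if_neg hde] at he'; exact absurd rfl he'
      rw [if_pos hde, mul_one] at he'
      set e := e' - expVec m c with hedef
      have heq : e + expVec m c = e' := tsub_add_cancel_of_le hde
      have hsum : ∀ p, e' p = e p + expVec m c p := by
        intro p; rw [← heq, Finsupp.add_apply]
      obtain ⟨⟨i, b⟩, ⟨hi1, him, hb1, hb2⟩, hne⟩ := H e (mem_support_iff.mpr he')
      replace hi1 : 1 ≤ i := hi1
      replace him : i ≤ m := him
      replace hb1 : c (i - 1) < b := hb1
      replace hb2 : b < c i := hb2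
      replace hne : e (i, b) ≠ 0 := hne
      set a := Function.update c i b with hadef
      have hai : a i = b := by rw [hadef]; exact Function.update_self i b c
      have haj : ∀ j, j ≠ i → a j = c j := by
        intro j hj; rw [hadef]; exact Function.update_of_ne hj b c
      have ha : IsDiagSeq m k l a := by
        refine ⟨?_, ?_, ?_⟩
        · intro j hj1 hjm
          rcases eq_or_ne j i with rfl | hji
          · rw [hai, haj (j + 1) (by omega)]
            have := hmono j hj1 hjm
            omega
          · rcases eq_or_ne (j + 1) i with hj2 | hj2
            · rw [haj j hji, hj2, hai]
              have hji' : j = i - 1 := by omega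
              rw [hji']
              exact hb1
            · rw [haj j hji, haj _ hj2]; exact hmono j hj1 hjm
        · rcases eq_or_ne 1 i with h1 | h1
          · rw [← h1] at hb1 hai
            rw [hai]
            rw [show (1 : ℕ) - 1 = 0 from rfl, hc0] at hb1
            omega
          · rw [haj 1 h1]; exact hc.2.1
        · rcases eq_or_ne m i with h1 | h1
          · rw [← h1] at hb2 hai
            rw [hai]
            have := hc.2.2
            omega
          · rw [haj m h1]; exact hc.2.2
      have hgt : tauGt (expVec m a) (expVec m c) := by
        refine ⟨(i, b), ?_, ?_⟩
        · rw [expVec_apply, expVec_apply,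
            if_neg (fun hh : 1 ≤ i ∧ i ≤ m ∧ c i = b => by omega),
            if_pos ⟨hi1, him, hai⟩]
          omega
        · rintro ⟨q1, q2⟩ hq
          replace hq : q1 < i ∨ (q1 = i ∧ q2 < b) := hq
          rw [expVec_apply, expVec_apply]
          rcases eq_or_ne q1 i with rfl | hqi
          · have hq2 : q2 < b := by
              rcases hq with h | h
              · omega
              · exact h.2
            rw [if_neg (fun hh : 1 ≤ q1 ∧ q1 ≤ m ∧ a q1 = q2 => by
                  obtain ⟨-, -, h⟩ := hh; rw [hai] at h; omega),
              if_neg (fun hh : 1 ≤ q1 ∧ q1 ≤ m ∧ c q1 = q2 => by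
                  obtain ⟨-, -, h⟩ := hh; omega)]
          · rw [haj q1 hqi]
      refine ⟨expVec m a, ⟨a, ha, hgt, rfl⟩, ?_⟩
      rw [Finsupp.le_def]
      rintro ⟨q1, q2⟩
      rw [expVec_apply]
      split_ifs with hcond
      · obtain ⟨hq1, hqm, hq⟩ := hcond
        rcases eq_or_ne q1 i with rfl | hqi
        · have hq2 : q2 = b := by rw [← hq, hai]
          subst hq2
          have h1 := hsum (q1, q2)
          have h2 : e (q1, q2) ≠ 0 := hne
          omega
        · have h3 : expVec m c (q1, q2) = 1 := by
            rw [expVec_apply, if_pos ⟨hq1, hqm, by rw [← haj q1 hqi]; exact hq⟩]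
          have h1 := hsum (q1, q2)
          omega
      · exact Nat.zero_le _
  exact ⟨by rw [hXV]; exact main, V, main⟩
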